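/- Let q ≥ hk+1 be a prime power, and for each α ∈ F_{q^h} with F_q(α) = F_{q^h}, let v_α = (1, α, α², …, α^{hk-1}) ∈ F_{q^h}^{hk}. Let X(α) ⊆ F_q^{hk} (viewed as F_q-subspace of F_{q^h}^{hk}) be the intersection of span_{F_{q^h}}{v_α, v_α^{(q)}, …, v_α^{(q^{h-1})}} with F_q^{hk}, where v^{(q^s)} denotes coordinatewise q^s-power. Then X(α) is an F_q-subspace of dimension h. -/

import Mathlib

open Module Polynomial

namespace ConjSpanAux

variable {Fq K : Type} [Field Fq] [Fintype Fq] [Field K] [Fintype K] [Algebra Fq K]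

lemma smul_pow_q (s : ℕ) (a : Fq) (x : K) :
    (a • x) ^ (Fintype.card Fq) ^ s = a • x ^ (Fintype.card Fq) ^ s := by
  rw [Algebra.smul_def, mul_pow, ← map_pow, FiniteField.pow_card_pow, Algebra.smul_def]

lemma add_pow_q (s : ℕ) (x y : K) :
    (x + y) ^ (Fintype.card Fq) ^ s
      = x ^ (Fintype.card Fq) ^ s + y ^ (Fintype.card Fq) ^ s := by
  set p := ringChar Fq with hp
  haveI : Fact p.Prime := ⟨CharP.char_is_prime Fq p⟩
  haveI : CharP K p := charP_of_injective_algebraMap (algebraMap Fq K).injective p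
  haveI : ExpChar K p := ExpChar.prime Fact.out
  obtain ⟨m, hm⟩ := FiniteField.card Fq p
  rw [hm.2]
  simp only [← pow_mul]
  exact add_pow_char_pow ..

/-- The `q`-polynomial with coefficients `c` as an `Fq`-linear endomorphism of `K`. -/
noncomputable def qpoly (h : ℕ) (c : Fin h → K) : K →ₗ[Fq] K where
  toFun := fun x => ∑ s : Fin h, c s * x ^ (Fintype.card Fq) ^ (s : ℕ)
  map_add' := fun x y => by
    simp_rw [add_pow_q, mul_add, Finset.sum_add_distrib]
  map_smul' := fun a x => by
    simp_rw [smul_pow_q, RingHom.id_apply, Finset.smul_sum, mul_smul_comm]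

lemma qpoly_apply (h : ℕ) (c : Fin h → K) (x : K) :
    (qpoly h c : K →ₗ[Fq] K) x = ∑ s : Fin h, c s * x ^ (Fintype.card Fq) ^ (s : ℕ) := rfl

/-- The linear map `c ↦ qpoly c`. -/
noncomputable def qpolyL (h : ℕ) : (Fin h → K) →ₗ[Fq] (K →ₗ[Fq] K) where
  toFun := qpoly h
  map_add' := fun c d => by
    ext x; simp [qpoly_apply, add_mul, Finset.sum_add_distrib]
  map_smul' := fun a c => by
    ext x; simp [qpoly_apply, Finset.smul_sum, smul_mul_assoc]

lemma qpolyL_injective (h : ℕ) (hrank : Module.finrank Fq K = h) :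
    Function.Injective (qpolyL (Fq := Fq) (K := K) h) := by
  have hh : 0 < h := hrank ▸ Module.finrank_pos
  rw [injective_iff_map_eq_zero]
  intro c hc
  by_contra hc0
  -- consider the polynomial ∑ c s • X ^ q ^ s
  set q := Fintype.card Fq with hq
  have hq2 : 2 ≤ q := Fintype.one_lt_card
  set P : K[X] := ∑ s : Fin h, C (c s) * X ^ (q ^ (s : ℕ)) with hP
  have hcoeff : ∀ s : Fin h, P.coeff (q ^ (s : ℕ)) = c s := by
    intro s
    rw [hP, Polynomial.finset_sum_coeff]
    rw [Finset.sum_eq_single s]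
    · simp
    · intro t _ hts
      simp only [coeff_C_mul, coeff_X_pow]
      rw [if_neg, mul_zero]
      exact fun hEq => hts (Fin.ext (Nat.pow_right_injective hq2 hEq.symm))
    · simp
  have hPeval : ∀ x : K, P.eval x = 0 := by
    intro x
    have := congrFun (congrArg (fun f => (f : K →ₗ[Fq] K).toFun) hc) x
    simp only [qpolyL, LinearMap.coe_mk, AddHom.coe_mk] at this
    have h2 : (qpoly (Fq := Fq) h c) x = 0 := by
      have := congrArg (fun f : K →ₗ[Fq] K => f x) hc
      exact this
    rw [hP]
    simp only [eval_finset_sum, eval_mul, eval_C, eval_pow, eval_X]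
    rw [qpoly_apply] at h2
    exact h2
  have hPne : P ≠ 0 := by
    obtain ⟨s, hs⟩ : ∃ s, c s ≠ 0 := by
      by_contra hall
      push_neg at hall
      exact hc0 (funext hall)
    intro h0
    exact hs (by rw [← hcoeff s, h0, coeff_zero])
  -- degree bound
  have hdeg : P.natDegree < Fintype.card K := by
    have hbound : P.natDegree ≤ q ^ (h - 1) := by
      refine (Polynomial.natDegree_sum_le _ _).trans ?_
      rw [Finset.fold_max_le]
      constructor
      · positivity
      · intro s _
        refine (natDegree_C_mul_le _ _).trans ?_
        refine (natDegree_X_pow_le _).trans ?_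
        exact Nat.pow_le_pow_right (by omega) (by have := s.isLt; omega)
    have hcard : Fintype.card K = q ^ h := by rw [← hrank]; exact card_eq_pow_finrank
    rw [hcard]
    exact lt_of_le_of_lt hbound (Nat.pow_lt_pow_right hq2 (by have := hh; omega))
  exact hPne (P.eq_zero_of_natDegree_lt_card_of_eval_eq_zero (f := (id : K → K))
    Function.injective_id hPeval (by simpa using hdeg))

lemma qpolyL_surjective (h : ℕ) (hrank : Module.finrank Fq K = h) :
    Function.Surjective (qpolyL (Fq := Fq) (K := K) h) := by
  have hfr : Module.finrank Fq (Fin h → K) = Module.finrank Fq (K →ₗ[Fq] K) := by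
    rw [Module.finrank_pi_fintype, Module.finrank_linearMap]
    simp [hrank, Finset.sum_const, mul_comm]
  exact (LinearMap.injective_iff_surjective_of_finrank_eq_finrank hfr).mp
    (qpolyL_injective h hrank)

lemma span_powers_eq_top (h m : ℕ) (hm : h ≤ m)
    (hrank : Module.finrank Fq K = h) (α : K)
    (hα : IntermediateField.adjoin Fq {α} = ⊤) :
    Submodule.span Fq (Set.range fun i : Fin m => α ^ (i : ℕ)) = ⊤ := by
  have hint : IsIntegral Fq α := IsIntegral.of_finite Fq α
  let e : IntermediateField.adjoin Fq {α} ≃ₐ[Fq] K :=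
    (IntermediateField.equivOfEq hα).trans IntermediateField.topEquiv
  let pb := (IntermediateField.adjoin.powerBasis hint).map e
  have hgen : pb.gen = α := rfl
  have hdim : pb.dim = h := by
    rw [← hrank, ← pb.finrank]
  rw [eq_top_iff, ← pb.basis.span_eq]
  refine Submodule.span_le.mpr ?_
  rintro x ⟨i, rfl⟩
  have hix : (i : ℕ) < m := lt_of_lt_of_le (hdim ▸ i.isLt) hm
  refine Submodule.subset_span ⟨⟨i, hix⟩, ?_⟩
  rw [pb.coe_basis, hgen]

end ConjSpanAux

open ConjSpanAux

theorem rational_points_of_conjugate_span_finrank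
    (Fq K : Type) [Field Fq] [Fintype Fq] [Field K] [Fintype K] [Algebra Fq K]
    (h k : ℕ) (hh : 0 < h) (hk0 : 0 < k)
    (hrank : Module.finrank Fq K = h)
    (hq : h * k + 1 ≤ Fintype.card Fq)
    (α : K) (hα : IntermediateField.adjoin Fq {α} = ⊤) :
    Module.finrank Fq
      ↥((Submodule.span K (Set.range (fun s : Fin h => fun i : Fin (h * k) =>
            α ^ ((i : ℕ) * (Fintype.card Fq) ^ (s : ℕ))))).restrictScalars Fq ⊓
        Submodule.pi Set.univ
          (fun _ : Fin (h * k) => Subalgebra.toSubmodule (⊥ : Subalgebra Fq K)))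
      = h := by
  classical
  set q := Fintype.card Fq with hqdef
  set n := h * k with hn
  have hnh : h ≤ n := Nat.le_mul_of_pos_right h hk0
  set v : Fin h → Fin n → K := fun s i => α ^ ((i : ℕ) * q ^ (s : ℕ)) with hv
  set S := (Submodule.span K (Set.range v)).restrictScalars Fq ⊓
      Submodule.pi Set.univ
        (fun _ : Fin n => Subalgebra.toSubmodule (⊥ : Subalgebra Fq K)) with hS
  have hbotcoe : ∀ z : (⊥ : Subalgebra Fq K),
      algebraMap Fq K ((Algebra.botEquiv Fq K) z) = ↑z := by
    intro z
    have hz := congrArg (Subtype.val) ((Algebra.botEquiv Fq K).symm_apply_apply z)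
    rw [Algebra.botEquiv_symm_apply] at hz
    exact hz
  -- the comparison linear map from the dual space
  set Φ : Module.Dual Fq K →ₗ[Fq] (Fin n → K) :=
    { toFun := fun L i => algebraMap Fq K (L (α ^ (i : ℕ)))
      map_add' := fun L M => by
        funext i; simp [map_add]
      map_smul' := fun a L => by
        funext i
        simp [Algebra.smul_def, map_mul] } with hΦ
  have hΦapply : ∀ (L : Module.Dual Fq K) (i : Fin n),
      Φ L i = algebraMap Fq K (L (α ^ (i : ℕ))) := fun _ _ => rfl
  have hspanpow := span_powers_eq_top (Fq := Fq) (K := K) h n hnh hrank α hα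
  have hΦinj : Function.Injective Φ := by
    rw [injective_iff_map_eq_zero]
    intro L hL
    apply LinearMap.ext
    intro x
    have hx : x ∈ Submodule.span Fq (Set.range fun i : Fin n => α ^ (i : ℕ)) := by
      rw [hspanpow]; trivial
    have : Submodule.span Fq (Set.range fun i : Fin n => α ^ (i : ℕ)) ≤ LinearMap.ker L := by
      rw [Submodule.span_le]
      rintro y ⟨i, rfl⟩
      have hLi := congrFun hL i
      rw [hΦapply] at hLi
      simp only [Pi.zero_apply] at hLi
      have := (algebraMap Fq K).injective (by simpa using hLi)
      simpa using this
    simpa using this hx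
  have hrange : LinearMap.range Φ = S := by
    apply le_antisymm
    · rintro x ⟨L, rfl⟩
      rw [hS]
      refine Submodule.mem_inf.mpr ⟨?_, ?_⟩
      · -- in the span
        obtain ⟨c, hc⟩ := qpolyL_surjective (Fq := Fq) (K := K) h hrank
          ((Algebra.linearMap Fq K).comp L)
        rw [Submodule.restrictScalars_mem]
        have hx : Φ L = ∑ s : Fin h, c s • v s := by
          funext i
          rw [hΦapply]
          have := congrArg (fun f : K →ₗ[Fq] K => f (α ^ (i : ℕ))) hc
          simp only [qpolyL, LinearMap.coe_mk, AddHom.coe_mk, LinearMap.coe_comp,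
            Function.comp_apply, Algebra.linearMap_apply] at this
          rw [qpoly_apply] at this
          rw [← this]
          simp only [Finset.sum_apply, Pi.smul_apply, smul_eq_mul, hv]
          congr 1
          funext s
          rw [← pow_mul]
        rw [hx]
        refine Submodule.sum_smul_mem _ _ ?_
        intro s _
        exact Submodule.subset_span ⟨s, rfl⟩
      · rw [Submodule.mem_pi]
        intro i _
        rw [hΦapply, Subalgebra.mem_toSubmodule, Algebra.mem_bot]
        exact ⟨L (α ^ (i : ℕ)), rfl⟩
    · rintro x hx
      rw [hS, Submodule.mem_inf] at hx
      obtain ⟨hx1, hx2⟩ := hx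
      rw [Submodule.restrictScalars_mem] at hx1
      obtain ⟨c, hc⟩ := (Submodule.mem_span_range_iff_exists_fun K).mp hx1
      set M : K →ₗ[Fq] K := qpoly h c with hM
      have hMα : ∀ i : Fin n, M (α ^ (i : ℕ)) = x i := by
        intro i
        rw [hM, qpoly_apply, ← congrFun hc i]
        simp only [Finset.sum_apply, Pi.smul_apply, smul_eq_mul, hv]
        congr 1
        funext s
        rw [← pow_mul]
      have hxmem : ∀ i : Fin n, x i ∈ (⊥ : Subalgebra Fq K) := by
        intro i
        have := Submodule.mem_pi.mp hx2 i (Set.mem_univ i)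
        simpa using this
      have hMmem : ∀ y : K, M y ∈ (⊥ : Subalgebra Fq K) := by
        intro y
        have hy : y ∈ Submodule.span Fq (Set.range fun i : Fin n => α ^ (i : ℕ)) := by
          rw [hspanpow]; trivial
        have hle : Submodule.span Fq (Set.range fun i : Fin n => α ^ (i : ℕ)) ≤
            Submodule.comap M (Subalgebra.toSubmodule (⊥ : Subalgebra Fq K)) := by
          rw [Submodule.span_le]
          rintro z ⟨i, rfl⟩
          have : M (α ^ (i : ℕ)) ∈ Subalgebra.toSubmodule (⊥ : Subalgebra Fq K) := by
            rw [Subalgebra.mem_toSubmodule, hMα i]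
            exact hxmem i
          exact this
        have := hle hy
        rwa [Submodule.mem_comap, Subalgebra.mem_toSubmodule] at this
      set L : Module.Dual Fq K :=
        { toFun := fun y => (Algebra.botEquiv Fq K) ⟨M y, hMmem y⟩
          map_add' := fun y z => by
            have he : (⟨M (y + z), hMmem _⟩ : (⊥ : Subalgebra Fq K))
                = ⟨M y, hMmem _⟩ + ⟨M z, hMmem _⟩ := Subtype.ext (by simp)
            show (Algebra.botEquiv Fq K) ⟨M (y + z), hMmem _⟩
                = (Algebra.botEquiv Fq K) ⟨M y, hMmem _⟩
                  + (Algebra.botEquiv Fq K) ⟨M z, hMmem _⟩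
            rw [he, map_add]
          map_smul' := fun a y => by
            have he : (⟨M (a • y), hMmem _⟩ : (⊥ : Subalgebra Fq K))
                = a • ⟨M y, hMmem _⟩ := Subtype.ext (by simp)
            show (Algebra.botEquiv Fq K) ⟨M (a • y), hMmem _⟩
                = a • (Algebra.botEquiv Fq K) ⟨M y, hMmem _⟩
            rw [he, map_smul] } with hL
      refine ⟨L, ?_⟩
      funext i
      rw [hΦapply]
      show algebraMap Fq K ((Algebra.botEquiv Fq K) ⟨M (α ^ (i : ℕ)), hMmem _⟩) = x i
      rw [hbotcoe]
      exact hMα i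
  have := LinearMap.finrank_range_of_inj hΦinj
  rw [hrange] at this
  rw [this, Subspace.dual_finrank_eq, hrank]
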